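/- If Π_{j=0}^∞ a_j > 0, then P(K(U_n) ≤ n for all n ∈ ℕ) > 0, and almost surely τ[0,∞] := sup{s ≤ 0 : K(U_j) ≤ j − s for all integers j ≥ s} is finite. -/

import Mathlib

open MeasureTheory ENNReal

lemma auxK {a : ℕ → ℝ} (hmono : Monotone a) {K : ℝ → ℕ∞}
    (hK : ∀ u : ℝ, K u = sInf ((fun k : ℕ => (k : ℕ∞)) '' {k : ℕ | u < a k}))
    (u : ℝ) (m : ℕ) : K u ≤ (m : ℕ∞) ↔ u < a m := by
  constructor
  · intro h
    rw [hK] at h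
    by_contra hlt
    push_neg at hlt
    have hlb : ((m + 1 : ℕ) : ℕ∞) ≤ sInf ((fun k : ℕ => (k : ℕ∞)) '' {k : ℕ | u < a k}) := by
      refine le_sInf ?_
      rintro x ⟨k, hk, rfl⟩
      have hmk : m < k := by
        by_contra hkm
        push_neg at hkm
        exact absurd hk (not_lt.2 (le_trans (hmono hkm) hlt))
      simp only []
      exact_mod_cast hmk
    have := hlb.trans h
    exact absurd (by exact_mod_cast this) (by omega)
  · intro h
    rw [hK]
    exact sInf_le ⟨m, h, rfl⟩

section Aux

variable {Ω : Type*} [MeasurableSpace Ω] {P : Measure Ω} {U : ℤ → Ω → ℝ}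

omit [MeasurableSpace Ω] in
lemma auxNothing : True := trivial

lemma auxIio (hUmeas : ∀ i, Measurable (U i))
    (hUnif : ∀ i, Measure.map (U i) P = volume.restrict (Set.Ico (0 : ℝ) 1))
    (i : ℤ) {t : ℝ} (h1 : t ≤ 1) :
    P ((U i) ⁻¹' Set.Iio t) = ENNReal.ofReal t := by
  have := Measure.map_apply (μ := P) (hUmeas i) (measurableSet_Iio (a := t))
  rw [hUnif i] at this
  rw [← this, Measure.restrict_apply measurableSet_Iio]
  have : Set.Iio t ∩ Set.Ico (0:ℝ) 1 = Set.Ico 0 t := by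
    ext x
    simp only [Set.mem_inter_iff, Set.mem_Iio, Set.mem_Ico]
    constructor
    · rintro ⟨h, h', _⟩; exact ⟨h', h⟩
    · rintro ⟨h', h⟩; exact ⟨h, h', lt_of_lt_of_le h h1⟩
  rw [this, Real.volume_Ico, sub_zero]

lemma auxIci (hUmeas : ∀ i, Measurable (U i))
    (hUnif : ∀ i, Measure.map (U i) P = volume.restrict (Set.Ico (0 : ℝ) 1))
    (i : ℤ) {t : ℝ} (h0 : 0 ≤ t) :
    P ((U i) ⁻¹' Set.Ici t) = ENNReal.ofReal (1 - t) := by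
  have := Measure.map_apply (μ := P) (hUmeas i) (measurableSet_Ici (a := t))
  rw [hUnif i] at this
  rw [← this, Measure.restrict_apply measurableSet_Ici]
  have : Set.Ici t ∩ Set.Ico (0:ℝ) 1 = Set.Ico t 1 ∩ Set.Ico 0 1 := by
    ext x; simp only [Set.mem_inter_iff, Set.mem_Ici, Set.mem_Ico]; constructor
    · rintro ⟨h, h', h''⟩; exact ⟨⟨h, h''⟩, h', h''⟩
    · rintro ⟨⟨h, h''⟩, h', _⟩; exact ⟨h, h', h''⟩
  rw [this]
  rcases le_or_gt t 1 with ht | ht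
  · have : Set.Ico t 1 ∩ Set.Ico (0:ℝ) 1 = Set.Ico t 1 := by
      apply Set.inter_eq_left.2
      intro x hx; exact ⟨le_trans h0 hx.1, hx.2⟩
    rw [this, Real.volume_Ico]
  · have h1 : Set.Ico t 1 = (∅ : Set ℝ) := Set.Ico_eq_empty (by linarith)
    rw [h1, Set.empty_inter, measure_empty, Eq.comm, ENNReal.ofReal_eq_zero]
    linarith

lemma auxProd
    (hIndep : ProbabilityTheory.iIndepFun U P)
    (S : Finset ℤ) (b : ℤ → ℝ) :
    P (⋂ j ∈ S, (U j) ⁻¹' Set.Iio (b j)) = ∏ j ∈ S, P ((U j) ⁻¹' Set.Iio (b j)) :=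
  hIndep.meas_biInter (fun j _ => ⟨Set.Iio (b j), measurableSet_Iio, rfl⟩)

end Aux

def embShift (t : ℤ) : ℕ ↪ ℤ := ⟨fun k => (k:ℤ) + t, fun x y h => by simpa using h⟩

@[simp] lemma embShift_apply (t : ℤ) (k : ℕ) : embShift t k = (k:ℤ) + t := rfl

lemma auxReal {a : ℕ → ℝ} (ha01 : ∀ k, a k ∈ Set.Icc (0:ℝ) 1)
    (hpos : 0 < ⨅ n : ℕ, ∏ j ∈ Finset.range n, a j) :
    Summable (fun k => 1 - a k) := by
  set c := ⨅ n : ℕ, ∏ j ∈ Finset.range n, a j with hc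
  have hbdd : BddBelow (Set.range (fun n : ℕ => ∏ j ∈ Finset.range n, a j)) :=
    ⟨0, by rintro x ⟨n, rfl⟩; exact Finset.prod_nonneg fun j _ => (ha01 j).1⟩
  have hle : ∀ n, c ≤ ∏ j ∈ Finset.range n, a j := fun n => ciInf_le hbdd n
  have hak : ∀ k, 0 < a k := by
    intro k
    have h1 : c ≤ ∏ j ∈ Finset.range (k+1), a j := hle (k+1)
    have h2 : ∏ j ∈ Finset.range (k+1), a j ≤ a k := by
      rw [Finset.prod_range_succ]
      have h3 : ∏ j ∈ Finset.range k, a j ≤ 1 :=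
        Finset.prod_le_one (fun j _ => (ha01 j).1) (fun j _ => (ha01 j).2)
      nlinarith [(ha01 k).1]
    linarith
  apply summable_of_sum_range_le (c := -Real.log c) (fun n => by linarith [(ha01 n).2])
  intro n
  have hlog : ∀ k, 1 - a k ≤ -Real.log (a k) := fun k => by
    have := Real.log_le_sub_one_of_pos (hak k); linarith
  calc ∑ k ∈ Finset.range n, (1 - a k) ≤ ∑ k ∈ Finset.range n, (-Real.log (a k)) :=
        Finset.sum_le_sum (fun k _ => hlog k)
    _ = -Real.log (∏ k ∈ Finset.range n, a k) := by
        rw [Real.log_prod (fun k _ => (hak k).ne')]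
        simp
    _ ≤ -Real.log c := by
        have := Real.log_le_log hpos (hle n)
        linarith

/-- Part (b) of Proposition "th0": let `(U_i)_{i∈ℤ}` be i.i.d. uniform on `[0,1)`,
`(a_k)` nondecreasing in `[0,1]` and `K(u) = inf{k : a_k > u}` (`∞` if no such `k`).
If `Π_{j=0}^∞ a_j > 0`, then `P(K(U_n) ≤ n for all n ∈ ℕ) > 0` and almost surely
`τ[0,∞] = sup{s ≤ 0 : K(U_j) ≤ j − s for all j ≥ s} > −∞`. -/
theorem stmt6 {Ω : Type*} [MeasurableSpace Ω] (P : Measure Ω) [IsProbabilityMeasure P]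
    (U : ℤ → Ω → ℝ) (hUmeas : ∀ i, Measurable (U i))
    (hIndep : ProbabilityTheory.iIndepFun U P)
    (hUnif : ∀ i, Measure.map (U i) P = volume.restrict (Set.Ico (0 : ℝ) 1))
    (a : ℕ → ℝ) (ha01 : ∀ k, a k ∈ Set.Icc (0 : ℝ) 1) (hmono : Monotone a)
    (K : ℝ → ℕ∞)
    (hK : ∀ u : ℝ, K u = sInf ((fun k : ℕ => (k : ℕ∞)) '' {k : ℕ | u < a k}))
    (hpos : 0 < ⨅ n : ℕ, ∏ j ∈ Finset.range n, a j) :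
    0 < P {ω | ∀ n : ℕ, K (U (n : ℤ) ω) ≤ (n : ℕ∞)} ∧
    ∀ᵐ ω ∂P, ∃ s : ℤ, s ≤ 0 ∧
      ∀ j : ℤ, s ≤ j → K (U j ω) ≤ (((j - s).toNat : ℕ) : ℕ∞) := by
  set c := ⨅ n : ℕ, ∏ j ∈ Finset.range n, a j with hc
  have hbdd : BddBelow (Set.range (fun n : ℕ => ∏ j ∈ Finset.range n, a j)) :=
    ⟨0, by rintro x ⟨n, rfl⟩; exact Finset.prod_nonneg fun j _ => (ha01 j).1⟩
  have hle : ∀ n, c ≤ ∏ j ∈ Finset.range n, a j := fun n => ciInf_le hbdd n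
  constructor
  · -- Part 1
    have hEq : {ω | ∀ n : ℕ, K (U (n : ℤ) ω) ≤ (n : ℕ∞)}
        = ⋂ n : ℕ, (U (n:ℤ)) ⁻¹' Set.Iio (a n) := by
      ext ω
      simp only [Set.mem_setOf_eq, Set.mem_iInter, Set.mem_preimage, Set.mem_Iio]
      exact forall_congr' fun n => auxK hmono hK _ n
    rw [hEq]
    set F : ℕ → Set Ω := fun N => ⋂ n ∈ Finset.range N, (U (n:ℤ)) ⁻¹' Set.Iio (a n) with hF
    have hFmeas : ∀ N, NullMeasurableSet (F N) P := fun N =>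
      (MeasurableSet.biInter (Finset.range N).countable_toSet
        fun n _ => (hUmeas _) measurableSet_Iio).nullMeasurableSet
    have hFanti : Antitone F := by
      intro M N hMN ω hω
      simp only [hF, Set.mem_iInter, Finset.mem_range] at *
      intro n hn
      exact hω n (lt_of_lt_of_le hn hMN)
    have hIE : (⋂ n : ℕ, (U (n:ℤ)) ⁻¹' Set.Iio (a n)) = ⋂ N, F N := by
      ext ω
      simp only [hF, Set.mem_iInter, Finset.mem_range, Set.mem_preimage, Set.mem_Iio]
      exact ⟨fun h N n _ => h n, fun h n => h (n+1) n (Nat.lt_succ_self n)⟩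
    rw [hIE, hFanti.measure_iInter hFmeas ⟨0, measure_ne_top P _⟩]
    have key : ∀ N, P (F N) = ENNReal.ofReal (∏ n ∈ Finset.range N, a n) := by
      intro N
      have hFS : F N = ⋂ j ∈ (Finset.range N).map (embShift 0),
          (U j) ⁻¹' Set.Iio (a j.toNat) := by
        ext ω
        simp only [hF, Set.mem_iInter, Finset.mem_map, Set.mem_preimage, Set.mem_Iio, embShift,
          Function.Embedding.coeFn_mk]
        constructor
        · rintro h j ⟨n, hn, rfl⟩
          simpa using h n hn
        · intro h n hn
          simpa using h ((n:ℤ) + 0) ⟨n, hn, rfl⟩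
      rw [hFS, auxProd hIndep, Finset.prod_map]
      have hfac : ∀ n ∈ Finset.range N,
          P ((U (embShift 0 n)) ⁻¹' Set.Iio (a ((embShift 0 n)).toNat))
          = ENNReal.ofReal (a n) := by
        intro n _
        simp only [embShift, Function.Embedding.coeFn_mk, add_zero, Int.toNat_natCast]
        exact auxIio hUmeas hUnif _ (ha01 n).2
      rw [Finset.prod_congr rfl hfac, ← ENNReal.ofReal_prod_of_nonneg (fun n _ => (ha01 n).1)]
    have : ENNReal.ofReal c ≤ ⨅ N, P (F N) := by
      refine le_iInf fun N => ?_
      rw [key N]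
      exact ENNReal.ofReal_le_ofReal (hle N)
    exact lt_of_lt_of_le (ENNReal.ofReal_pos.2 hpos) this
  · -- Part 2
    have hsummable := auxReal ha01 hpos
    have haN1 : Filter.Tendsto a Filter.atTop (nhds 1) := by
      have h0 := hsummable.tendsto_atTop_zero
      have h1 : Filter.Tendsto (fun k => 1 - (1 - a k)) Filter.atTop (nhds (1 - 0)) :=
        Filter.Tendsto.const_sub 1 h0
      simpa using h1
    -- blocks
    set blk : ℕ → Finset ℤ := fun n => Finset.Ico (-(2^(n+1) : ℤ)) (-(2^n : ℤ)) with hblk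
    set b : ℤ → ℝ := fun j => a ((j + 2 ^ (Nat.log 2 (j.natAbs - 1) + 1)).toNat) with hb
    have hbmem : ∀ n : ℕ, ∀ j ∈ blk n, b j = a ((j + 2^(n+1)).toNat) := by
      intro n j hj
      simp only [hblk, Finset.mem_Ico] at hj
      have p2 : ((2^n : ℕ) : ℤ) = (2:ℤ)^n := by push_cast; ring
      have p2' : ((2^(n+1) : ℕ) : ℤ) = (2:ℤ)^(n+1) := by push_cast; ring
      have h1 : 2^n ≤ j.natAbs - 1 := by omega
      have h2 : j.natAbs - 1 < 2^(n+1) := by omega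
      have := Nat.log_eq_of_pow_le_of_lt_pow h1 h2
      simp only [hb, this]
    set B : ℕ → Set Ω := fun n => ⋂ j ∈ blk n, (U j) ⁻¹' Set.Iio (b j) with hB
    have hBmeas : ∀ n, MeasurableSet (B n) :=
      fun n => MeasurableSet.biInter (blk n).countable_toSet
        fun j _ => (hUmeas j) measurableSet_Iio
    have hdisj : (Set.univ : Set ℕ).PairwiseDisjoint blk := by
      intro m _ n _ hmn
      simp only [Function.onFun]
      rw [Finset.disjoint_left]
      intro j hjm hjn
      simp only [hblk, Finset.mem_Ico] at hjm hjn
      rcases lt_or_gt_of_ne hmn with h | h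
      · have : (2:ℤ)^(m+1) ≤ 2^n := pow_le_pow_right₀ one_le_two (by omega)
        linarith [hjm.1, hjn.2]
      · have : (2:ℤ)^(n+1) ≤ 2^m := pow_le_pow_right₀ one_le_two (by omega)
        linarith [hjn.1, hjm.2]
    have hBindep : ProbabilityTheory.iIndepSet B P := by
      rw [ProbabilityTheory.iIndepSet_iff_meas_biInter hBmeas]
      intro T
      have hU : (⋂ n ∈ T, B n) = ⋂ j ∈ T.biUnion blk, (U j) ⁻¹' Set.Iio (b j) := by
        ext ω
        simp only [hB, Set.mem_iInter, Finset.mem_biUnion]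
        constructor
        · rintro h j ⟨n, hn, hjn⟩
          exact h n hn j hjn
        · intro h n hn j hjn
          exact h j ⟨n, hn, hjn⟩
      rw [hU, auxProd hIndep,
        Finset.prod_biUnion (fun m _ n _ hmn => hdisj (Set.mem_univ m) (Set.mem_univ n) hmn)]
      exact Finset.prod_congr rfl fun n _ => (auxProd hIndep (blk n) b).symm
    have hblkmap : ∀ n : ℕ, blk n =
        (Finset.range (2^n)).map (embShift (-(2^(n+1)))) := by
      intro n
      ext j
      simp only [hblk, Finset.mem_Ico, Finset.mem_map, Finset.mem_range, embShift_apply,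
        Function.Embedding.coeFn_mk]
      have p1 : (2:ℤ)^(n+1) = 2 * 2^n := by ring
      have p2 : ((2^n : ℕ) : ℤ) = (2:ℤ)^n := by push_cast; ring
      constructor
      · rintro ⟨h1, h2⟩
        have hnn : (0:ℤ) ≤ j + 2^(n+1) := by linarith
        refine ⟨(j + 2^(n+1)).toNat, ?_, ?_⟩
        · have heq : ((j + 2^(n+1)).toNat : ℤ) = j + 2^(n+1) := Int.toNat_of_nonneg hnn
          have hlt : ((j + 2^(n+1)).toNat : ℤ) < ((2^n : ℕ) : ℤ) := by
            rw [heq, p2]; linarith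
          exact_mod_cast hlt
        · rw [Int.toNat_of_nonneg hnn]; ring
      · rintro ⟨k, hk, rfl⟩
        have hk' : (k:ℤ) < (2:ℤ)^n := by rw [← p2]; exact_mod_cast hk
        constructor <;> linarith
    have hPB : ∀ n, ENNReal.ofReal c ≤ P (B n) := by
      intro n
      have : P (B n) = ENNReal.ofReal (∏ k ∈ Finset.range (2^n), a k) := by
        rw [hB]
        simp only []
        rw [auxProd hIndep]
        have h1 : ∀ j ∈ blk n, P ((U j) ⁻¹' Set.Iio (b j))
            = ENNReal.ofReal (a ((j + 2^(n+1)).toNat)) := by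
          intro j hj
          rw [hbmem n j hj]
          exact auxIio hUmeas hUnif _ (ha01 _).2
        rw [Finset.prod_congr rfl h1, hblkmap n, Finset.prod_map]
        have h2 : ∀ k ∈ Finset.range (2^n),
            ENNReal.ofReal (a (((embShift (-(2^(n+1))) k) + 2^(n+1)).toNat))
              = ENNReal.ofReal (a k) := by
          intro k _
          simp [embShift_apply]
        rw [Finset.prod_congr rfl h2,
          ← ENNReal.ofReal_prod_of_nonneg (fun k _ => (ha01 k).1)]
      rw [this]
      exact ENNReal.ofReal_le_ofReal (hle _)
    have htop : ∑' n, P (B n) = ⊤ := by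
      refine top_unique ?_
      calc (⊤:ℝ≥0∞) = ∑' _ : ℕ, ENNReal.ofReal c :=
            (ENNReal.tsum_const_eq_top_of_ne_zero (ENNReal.ofReal_pos.2 hpos).ne').symm
        _ ≤ ∑' n, P (B n) := ENNReal.tsum_le_tsum hPB
    have hone := ProbabilityTheory.measure_limsup_eq_one hBmeas hBindep htop
    have h3 : ∀ᵐ ω ∂P, ω ∈ Filter.limsup B Filter.atTop := by
      rw [ae_iff]
      have hms : MeasurableSet (Filter.limsup B Filter.atTop) := MeasurableSet.measurableSet_limsup hBmeas
      have : {ω | ¬ ω ∈ Filter.limsup B Filter.atTop} = (Filter.limsup B Filter.atTop)ᶜ := rfl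
      rw [this, measure_compl hms (measure_ne_top P _), hone, measure_univ]
      simp
    -- first Borel-Cantelli
    have hsum2 : ∑' j : ℤ, P ((U j) ⁻¹' Set.Ici (a j.natAbs)) ≠ ⊤ := by
      have heq : ∀ j : ℤ, P ((U j) ⁻¹' Set.Ici (a j.natAbs))
          = ENNReal.ofReal (1 - a j.natAbs) := fun j => auxIci hUmeas hUnif j (ha01 _).1
      have hs : Summable (fun j : ℤ => 1 - a j.natAbs) := by
        apply Summable.of_nat_of_neg
        · simpa using hsummable
        · simpa using hsummable
      rw [tsum_congr heq,
        ← ENNReal.ofReal_tsum_of_nonneg (fun j => by linarith [(ha01 (j.natAbs)).2]) hs]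
      exact ENNReal.ofReal_ne_top
    have h1 := ae_finite_setOf_mem hsum2
    have h2 : ∀ᵐ ω ∂P, ∀ j : ℤ, U j ω < 1 := by
      rw [ae_all_iff]
      intro j
      have hz : P ((U j)⁻¹' Set.Ici 1) = 0 := by
        rw [auxIci hUmeas hUnif j zero_le_one]; simp
      rw [ae_iff]
      convert hz using 2
      ext ω
      simp [not_lt]
    filter_upwards [h1, h2, h3] with ω hfin hlt hfreq
    obtain ⟨N0, hN0⟩ : ∃ N0 : ℕ, ∀ j : ℤ, N0 ≤ j.natAbs → U j ω < a j.natAbs := by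
      have himg : (Set.Finite (Int.natAbs ''
          {j : ℤ | ω ∈ (U j) ⁻¹' Set.Ici (a j.natAbs)})) := hfin.image _
      obtain ⟨M, hM⟩ := himg.bddAbove
      refine ⟨M+1, fun j hj => ?_⟩
      by_contra hcon
      push_neg at hcon
      have hmem : j.natAbs ∈ Int.natAbs '' {j : ℤ | ω ∈ (U j) ⁻¹' Set.Ici (a j.natAbs)} :=
        ⟨j, by simpa [Set.mem_setOf_eq, Set.mem_preimage, Set.mem_Ici] using hcon, rfl⟩
      have := hM hmem
      omega
    have hev : ∀ᶠ k in Filter.atTop, ∀ j ∈ Finset.Ioo (-(N0:ℤ)) (N0:ℤ), U j ω < a k := by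
      rw [Filter.eventually_all_finset]
      intro j _
      exact haN1.eventually_const_lt (hlt j)
    obtain ⟨m, hm⟩ := hev.exists
    have hfreq' : ∃ᶠ n in Filter.atTop, ω ∈ B n := Filter.mem_limsup_iff_frequently_mem.1 hfreq
    obtain ⟨n, hn_ge, hn_mem⟩ := Filter.frequently_atTop.1 hfreq' (m + N0)
    refine ⟨-(2^(n+1) : ℤ), neg_nonpos.2 (pow_nonneg (by norm_num) _), ?_⟩
    intro j hj
    rw [auxK hmono hK]
    have hj2 : j - -(2^(n+1) : ℤ) = j + 2^(n+1) := by ring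
    rw [hj2]
    have p1 : (2:ℤ)^(n+1) = 2 * 2^n := by ring
    have hX : (0:ℤ) < 2^n := pow_pos two_pos n
    have p3 : m + N0 < 2^n := lt_of_le_of_lt hn_ge Nat.lt_two_pow_self
    have p3' : (m:ℤ) + (N0:ℤ) < (2:ℤ)^n := by exact_mod_cast p3
    by_cases hc1 : j < -(2^n : ℤ)
    · have hjb : j ∈ blk n := by
        simp only [hblk, Finset.mem_Ico]
        exact ⟨by linarith, hc1⟩
      have hmem := hn_mem
      simp only [hB, Set.mem_iInter, Set.mem_preimage, Set.mem_Iio] at hmem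
      have h := hmem j hjb
      rwa [hbmem n j hjb] at h
    · push_neg at hc1
      by_cases hc2 : N0 ≤ j.natAbs
      · refine lt_of_lt_of_le (hN0 j hc2) (hmono ?_)
        -- j.natAbs ≤ (j + 2^(n+1)).toNat
        rw [p1]
        generalize hX' : (2:ℤ)^n = X at hc1 hX ⊢
        omega
      · push_neg at hc2
        have hjI : j ∈ Finset.Ioo (-(N0:ℤ)) (N0:ℤ) := by
          simp only [Finset.mem_Ioo]
          omega
        refine lt_of_lt_of_le (hm j hjI) (hmono ?_)
        -- m ≤ (j + 2^(n+1)).toNat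
        rw [p1]
        have hjN : -(N0:ℤ) < j := by omega
        generalize hX' : (2:ℤ)^n = X at p3' hX ⊢
        omega
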